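/- Let (X, r) be a non-degenerate involutive set-theoretic solution of the Yang–Baxter equation with |X| = m ≥ 2, and let λ = (λ_1, …, λ_k) ∈ P(n, m) have all positive parts equal, λ_1 = λ_2 = ⋯ = λ_k > 0. If x is a λ-element, then the number of λ-elements contained in the orbit O(x) is exactly k!. -/

import Mathlib

/-! Set-theoretic solutions of the Yang–Baxter equation.
For `r : X × X → X × X` we write `r (i, j) = (σ i j, τ j i)`, i.e. `σ_i(j) = σ i j` and
`τ_j(i) = τ j i`. -/

variable {X : Type*}

/-- The map `r : X × X → X × X` determined by families `σ`, `τ` via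
`r (i, j) = (σ_i(j), τ_j(i))`. -/
def rmapF (σ τ : X → X → X) : X × X → X × X := fun p => (σ p.1 p.2, τ p.2 p.1)

/-- `r × id` on `X × X × X`. -/
def ridF (r : X × X → X × X) : X × X × X → X × X × X :=
  fun p => ((r (p.1, p.2.1)).1, (r (p.1, p.2.1)).2, p.2.2)

/-- `id × r` on `X × X × X`. -/
def idrF (r : X × X → X × X) : X × X × X → X × X × X := fun p => (p.1, r p.2)

/-- The braid (Yang–Baxter) equation `(r × id) ∘ (id × r) ∘ (r × id) = (id × r) ∘ (r × id) ∘ (id × r)`. -/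
def BraidEq (r : X × X → X × X) : Prop :=
  ridF r ∘ idrF r ∘ ridF r = idrF r ∘ ridF r ∘ idrF r

/-- A non-degenerate involutive set-theoretic solution of the Yang–Baxter equation on `X`:
the maps `σ_i` and `τ_i` are bijective (packaged as equivalences), the induced map
`r (i, j) = (σ_i(j), τ_j(i))` satisfies the braid equation, and `r ∘ r = id`
(which in particular makes `r` bijective). -/
structure NDIS (X : Type*) where
  σ : X → X ≃ X
  τ : X → X ≃ X
  braid : BraidEq (rmapF (fun i => ⇑(σ i)) (fun i => ⇑(τ i)))
  invol : ∀ p : X × X,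
    rmapF (fun i => ⇑(σ i)) (fun i => ⇑(τ i))
      (rmapF (fun i => ⇑(σ i)) (fun i => ⇑(τ i)) p) = p

namespace NDIS

/-- The map `r` of the solution. -/
def r (S : NDIS X) : X × X → X × X := rmapF (fun i => ⇑(S.σ i)) (fun i => ⇑(S.τ i))

/-- The diagonal `D : X → X`, `D(i) = τ_i⁻¹(i)`. -/
def D (S : NDIS X) : X → X := fun i => (S.τ i).symm i

end NDIS
namespace NDIS

/-- One elementary move on words: apply `r` to two adjacent letters. -/
def Step (S : NDIS X) (x y : List X) : Prop :=
  ∃ (u v : List X) (i j : X), x = u ++ i :: j :: v ∧ y = u ++ S.σ i j :: S.τ j i :: v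

/-- The orbit `O(x)` of a word `x` under the equivalence relation generated by the
adjacent `r`-moves (equivalently, the orbit of the induced `S_n`-action on `X^n`). -/
def Orb (S : NDIS X) (x : List X) : Set (List X) := {y | Relation.EqvGen S.Step x y}

/-- `Ψ_k(a) = (D^{k−1}(a), …, D(a), a)`. -/
def Psi (S : NDIS X) (k : ℕ) (a : X) : List X :=
  (List.range k).map fun t => S.D^[k - 1 - t] a

/-- The inverse of the diagonal `D`. -/
noncomputable def Dinv (S : NDIS X) [Nonempty X] : X → X := Function.invFun S.D

/-- `Ψ_{−k}(a) = (a, D^{−1}(a), …, D^{−(k−1)}(a))`. -/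
noncomputable def PsiNeg (S : NDIS X) [Nonempty X] (k : ℕ) (a : X) : List X :=
  (List.range k).map fun t => S.Dinv^[t] a

/-- `σ_x = σ_{a_1} ∘ σ_{a_2} ∘ ⋯ ∘ σ_{a_k}` for a word `x = (a_1, …, a_k)`. -/
def sigmaWord (S : NDIS X) (x : List X) (z : X) : X := x.foldr (fun a w => S.σ a w) z

/-- `τ_x = τ_{a_k} ∘ ⋯ ∘ τ_{a_2} ∘ τ_{a_1}` for a word `x = (a_1, …, a_k)`. -/
def tauWord (S : NDIS X) (x : List X) (z : X) : X := x.foldl (fun w a => S.τ a w) z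

/-- The concatenation `Ψ_{L 0}(a 0) Ψ_{L 1}(a 1) ⋯ Ψ_{L (k-1)}(a (k-1))`. -/
def word (S : NDIS X) {k : ℕ} (L : Fin k → ℕ) (a : Fin k → X) : List X :=
  (List.ofFn fun t => S.Psi (L t) (a t)).flatten

/-- The concatenation `Ψ_{L (i+1)}(a (i+1)) ⋯ Ψ_{L (j-1)}(a (j-1))` of the blocks strictly
between positions `i` and `j` (the empty word when `j = i + 1`). -/
def midword (S : NDIS X) {k : ℕ} (L : Fin k → ℕ) (a : Fin k → X) (i j : Fin k) : List X :=
  (((List.ofFn fun t => S.Psi (L t) (a t)).drop ((i : ℕ) + 1)).take ((j : ℕ) - (i : ℕ) - 1)).flatten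

/-- The family `a` yields a `λ`-element: `a_j ≠ D^{−λ_j}(τ_w(a_i))` for all `i < j`, with
`w = Ψ_{λ_{i+1}}(a_{i+1}) ⋯ Ψ_{λ_{j−1}}(a_{j−1})`. -/
def IsLambdaFamily (S : NDIS X) [Nonempty X] {k : ℕ} (L : Fin k → ℕ) (a : Fin k → X) : Prop :=
  ∀ i j : Fin k, i < j →
    a j ≠ S.Dinv^[L j] (S.tauWord (S.midword L a i j) (a i))

/-- `x` is a `λ`-element for the partition with positive parts `L 0 ≥ L 1 ≥ ⋯ ≥ L (k-1) > 0`. -/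
def IsLambdaWord (S : NDIS X) [Nonempty X] {k : ℕ} (L : Fin k → ℕ) (x : List X) : Prop :=
  ∃ a : Fin k → X, x = S.word L a ∧ S.IsLambdaFamily L a

/-- The bijection `b` of `X^n` applying `r` to the entries in (0-based) positions `j` and
`j + 1` and fixing all other entries. -/
def bmap (S : NDIS X) {n : ℕ} (j : ℕ) (hj : j + 1 < n) (x : Fin n → X) : Fin n → X :=
  fun t =>
    if (t : ℕ) = j then S.σ (x ⟨j, by omega⟩) (x ⟨j + 1, hj⟩)
    else if (t : ℕ) = j + 1 then S.τ (x ⟨j + 1, hj⟩) (x ⟨j, by omega⟩)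
    else x t

/-- One elementary move on `X^n` (as functions `Fin n → X`). -/
def StepF (S : NDIS X) {n : ℕ} (x y : Fin n → X) : Prop :=
  ∃ (j : ℕ) (hj : j + 1 < n), y = S.bmap j hj x

end NDIS

/-! ### Auxiliary development -/

namespace NDIS
variable (S : NDIS X)

lemma sigma_tau (i j : X) : S.σ (S.σ i j) (S.τ j i) = i := by
  have h := S.invol (i, j)
  have := congrArg Prod.fst h
  simpa [rmapF] using this

lemma tau_sigma (i j : X) : S.τ (S.τ j i) (S.σ i j) = j := by
  have h := S.invol (i, j)
  have := congrArg Prod.snd h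
  simpa [rmapF] using this

lemma tau_braid (a b c : X) :
    S.τ (S.τ c b) (S.τ (S.σ b c) a) = S.τ c (S.τ b a) := by
  have h := congrFun S.braid (a, b, c)
  have := congrArg (fun p : X × X × X => p.2.2) h
  simpa [ridF, idrF, rmapF, Function.comp] using this.symm

lemma tau_D (b : X) : S.τ b (S.D b) = b := by simp [D]

lemma D_sigma_symm (i : X) : S.D ((S.σ i).symm i) = i := by
  have h := S.sigma_tau i ((S.σ i).symm i)
  rw [Equiv.apply_symm_apply] at h
  have h2 : S.τ ((S.σ i).symm i) i = (S.σ i).symm i :=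
    (S.σ i).injective (by rw [h, Equiv.apply_symm_apply])
  simp only [D]
  exact (Equiv.symm_apply_eq _).2 h2.symm

lemma sigma_D (j : X) : S.σ (S.D j) j = S.D j := by
  have h := S.tau_sigma (S.D j) j
  rw [tau_D] at h
  have : S.σ (S.D j) j = (S.τ j).symm j := (S.τ j).injective (by rw [h, Equiv.apply_symm_apply])
  simpa [D] using this

lemma D_bijective : Function.Bijective S.D := by
  constructor
  · intro p q hpq
    apply (S.σ (S.D p)).injective
    rw [sigma_D S p, hpq]; exact (sigma_D S q).symm
  · intro i; exact ⟨(S.σ i).symm i, S.D_sigma_symm i⟩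

section DinvLemmas
variable [Nonempty X]

lemma Dinv_D (a : X) : S.Dinv (S.D a) = a :=
  Function.leftInverse_invFun S.D_bijective.injective a

lemma D_Dinv (a : X) : S.D (S.Dinv a) = a :=
  Function.rightInverse_invFun S.D_bijective.surjective a

lemma Dinv_iterate_D_iterate (c : ℕ) (a : X) : S.Dinv^[c] (S.D^[c] a) = a :=
  (Function.LeftInverse.iterate S.Dinv_D c) a

lemma D_iterate_eq_iff (c : ℕ) (a u : X) : S.D^[c] a = u ↔ a = S.Dinv^[c] u := by
  constructor
  · rintro rfl; exact (S.Dinv_iterate_D_iterate c a).symm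
  · rintro rfl; exact (Function.RightInverse.iterate S.D_Dinv c) u

end DinvLemmas

@[simp] lemma tauWord_nil (z : X) : S.tauWord [] z = z := rfl

@[simp] lemma tauWord_cons (a : X) (w : List X) (z : X) :
    S.tauWord (a :: w) z = S.tauWord w (S.τ a z) := rfl

lemma tauWord_append (u v : List X) (z : X) :
    S.tauWord (u ++ v) z = S.tauWord v (S.tauWord u z) :=
  List.foldl_append

/-- `tauWord` as an equivalence. -/
def tauE (S : NDIS X) : List X → (X ≃ X)
  | [] => Equiv.refl X
  | a :: w => (S.τ a).trans (tauE S w)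

lemma tauE_apply (w : List X) (z : X) : S.tauE w z = S.tauWord w z := by
  induction w generalizing z with
  | nil => rfl
  | cons a w ih => simp [tauE, ih]

lemma tauWord_injective (w : List X) : Function.Injective (S.tauWord w ·) := by
  intro p q h
  exact (S.tauE w).injective (by rw [tauE_apply, tauE_apply]; exact h)

/-- The Etingof–Schedler–Soloviev equivariant bijection on words. -/
def Jmap (S : NDIS X) : List X → List X
  | [] => []
  | a :: w => S.tauWord w a :: Jmap S w

@[simp] lemma Jmap_nil : S.Jmap [] = [] := rfl

@[simp] lemma Jmap_cons (a : X) (w : List X) :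
    S.Jmap (a :: w) = S.tauWord w a :: S.Jmap w := rfl

@[simp] lemma length_Jmap (w : List X) : (S.Jmap w).length = w.length := by
  induction w with
  | nil => rfl
  | cons a w ih => simp [ih]

lemma Jmap_append (u v : List X) :
    S.Jmap (u ++ v) = (S.Jmap u).map (S.tauWord v) ++ S.Jmap v := by
  induction u with
  | nil => simp
  | cons a u ih => simp [ih, tauWord_append]

lemma Jmap_injective : Function.Injective S.Jmap := by
  intro w w' h
  induction w generalizing w' with
  | nil => cases w' with
    | nil => rfl
    | cons a w' => exact absurd (congrArg List.length h) (by simp)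
  | cons a w ih => cases w' with
    | nil => exact absurd (congrArg List.length h) (by simp)
    | cons a' w' =>
      simp only [Jmap_cons, List.cons.injEq] at h
      have hw : w = w' := ih h.2
      subst hw
      have := S.tauWord_injective w h.1
      rw [this]

/-- Inverse of `Jmap`. -/
noncomputable def Jinv (S : NDIS X) : List X → List X
  | [] => []
  | p :: w => (S.tauE (Jinv S w)).symm p :: Jinv S w

lemma Jmap_Jinv (w : List X) : S.Jmap (S.Jinv w) = w := by
  induction w with
  | nil => rfl
  | cons p w ih => simp [Jinv, ih, ← tauE_apply]

end NDIS

/-- One adjacent transposition on lists. -/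
def AdjStep {X : Type*} (l l' : List X) : Prop :=
  ∃ u v p q, l = u ++ p :: q :: v ∧ l' = u ++ q :: p :: v

namespace NDIS
variable (S : NDIS X)

lemma Jmap_decomp (u v : List X) (i j : X) :
    S.Jmap (u ++ i :: j :: v) =
      (S.Jmap u).map (S.tauWord (i :: j :: v)) ++
        S.tauWord v (S.τ j i) :: S.tauWord v j :: S.Jmap v := by
  rw [Jmap_append]; simp

lemma Jmap_decomp' (u v : List X) (i j : X) :
    S.Jmap (u ++ S.σ i j :: S.τ j i :: v) =
      (S.Jmap u).map (S.tauWord (i :: j :: v)) ++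
        S.tauWord v j :: S.tauWord v (S.τ j i) :: S.Jmap v := by
  rw [Jmap_append]
  congr 1
  · apply List.map_congr_left
    intro z _
    simp only [tauWord_cons]
    rw [tau_braid]
  · simp [tau_sigma]

lemma Jmap_step {x y : List X} (h : S.Step x y) : AdjStep (S.Jmap x) (S.Jmap y) := by
  obtain ⟨u, v, i, j, hx, hy⟩ := h
  subst hx; subst hy
  exact ⟨(S.Jmap u).map (S.tauWord (i :: j :: v)), S.Jmap v,
    S.tauWord v (S.τ j i), S.tauWord v j, S.Jmap_decomp u v i j, S.Jmap_decomp' u v i j⟩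

lemma step_of_decomp {x U V : List X} {p q : X}
    (h : S.Jmap x = U ++ p :: q :: V) :
    ∃ y, S.Step x y ∧ S.Jmap y = U ++ q :: p :: V := by
  have hlen : U.length + 2 ≤ x.length := by
    have := congrArg List.length h
    simp at this; omega
  obtain ⟨i, j, v, hrest⟩ : ∃ i j v, x.drop U.length = i :: j :: v := by
    rcases hd : x.drop U.length with _ | ⟨i, _ | ⟨j, v⟩⟩
    · have := congrArg List.length hd; simp at this; omega
    · have := congrArg List.length hd; simp at this; omega
    · exact ⟨i, j, v, rfl⟩

  set u := x.take U.length with hu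
  have hx : x = u ++ i :: j :: v := by rw [hu, ← hrest, List.take_append_drop]
  have hJx := S.Jmap_decomp u v i j
  rw [← hx] at hJx
  rw [h] at hJx
  have hlu : U.length = ((S.Jmap u).map (S.tauWord (i :: j :: v))).length := by
    simp [hu]
    omega
  obtain ⟨hU, htail⟩ := List.append_inj hJx hlu
  simp only [List.cons.injEq] at htail
  refine ⟨u ++ S.σ i j :: S.τ j i :: v, ⟨u, v, i, j, hx, rfl⟩, ?_⟩
  rw [S.Jmap_decomp' u v i j, hU, htail.1, htail.2.1, htail.2.2]

end NDIS

namespace NDIS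

lemma eqvgen_adjstep_cons {X : Type*} {l l' : List X} (a : X)
    (h : Relation.EqvGen AdjStep l l') : Relation.EqvGen AdjStep (a :: l) (a :: l') := by
  induction h with
  | rel x y hxy =>
    obtain ⟨u, v, p, q, h1, h2⟩ := hxy
    exact .rel _ _ ⟨a :: u, v, p, q, by simp [h1], by simp [h2]⟩
  | refl => exact .refl _
  | symm _ _ _ ih => exact .symm _ _ ih
  | trans _ _ _ _ _ ih1 ih2 => exact .trans _ _ _ ih1 ih2

lemma eqvgen_adj_of_perm {X : Type*} {l l' : List X} (h : l.Perm l') :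
    Relation.EqvGen AdjStep l l' := by
  induction h with
  | nil => exact .refl _
  | cons a _ ih => exact eqvgen_adjstep_cons a ih
  | swap p q l => exact .rel _ _ ⟨[], l, q, p, rfl, rfl⟩
  | trans _ _ ih1 ih2 => exact .trans _ _ _ ih1 ih2

lemma perm_of_adjstep {X : Type*} {l l' : List X} (h : AdjStep l l') : l.Perm l' := by
  obtain ⟨u, v, p, q, h1, h2⟩ := h
  subst h1; subst h2
  exact List.Perm.append_left u (List.Perm.swap q p v)

variable (S : NDIS X)

lemma perm_Jmap_of_orb {x y : List X} (h : Relation.EqvGen S.Step x y) :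
    (S.Jmap x).Perm (S.Jmap y) := by
  induction h with
  | rel _ _ hxy => exact perm_of_adjstep (S.Jmap_step hxy)
  | refl => exact .refl _
  | symm _ _ _ ih => exact ih.symm
  | trans _ _ _ _ _ ih1 ih2 => exact ih1.trans ih2

lemma eqvgen_step_of_adj {w w' : List X} (h : Relation.EqvGen AdjStep w w') :
    ∀ {y y' : List X}, S.Jmap y = w → S.Jmap y' = w' → Relation.EqvGen S.Step y y' := by
  induction h with
  | rel w1 w2 h12 =>
    intro y y' hy hy'
    obtain ⟨u, v, p, q, h1, h2⟩ := h12
    obtain ⟨z, hz1, hz2⟩ := S.step_of_decomp (x := y) (by rw [hy, h1])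
    have hzy' : z = y' := S.Jmap_injective (by rw [hz2, hy', h2])
    exact hzy' ▸ Relation.EqvGen.rel _ _ hz1
  | refl w1 =>
    intro y y' hy hy'
    have : y = y' := S.Jmap_injective (hy.trans hy'.symm)
    exact this ▸ Relation.EqvGen.refl _
  | symm w1 w2 _ ih =>
    intro y y' hy hy'
    exact .symm _ _ (ih hy' hy)
  | trans w1 w2 w3 _ _ ih1 ih2 =>
    intro y y' hy hy'
    exact .trans _ _ _ (ih1 hy (S.Jmap_Jinv w2)) (ih2 (S.Jmap_Jinv w2) hy')

lemma mem_orb_iff {x y : List X} : y ∈ S.Orb x ↔ (S.Jmap x).Perm (S.Jmap y) :=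
  ⟨fun h => S.perm_Jmap_of_orb h,
   fun h => S.eqvgen_step_of_adj (eqvgen_adj_of_perm h) rfl rfl⟩

end NDIS

namespace NDIS
variable (S : NDIS X)

@[simp] lemma Psi_zero (a : X) : S.Psi 0 a = [] := rfl

lemma Psi_succ (c : ℕ) (a : X) : S.Psi (c + 1) a = S.D^[c] a :: S.Psi c a := by
  simp only [Psi, List.range_succ_eq_map, List.map_cons, List.map_map]
  refine congrArg₂ _ (by simp) ?_
  apply List.map_congr_left
  intro t _
  simp only [Function.comp_apply]
  congr 1
  omega

@[simp] lemma length_Psi (c : ℕ) (a : X) : (S.Psi c a).length = c := by simp [Psi]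

lemma tauWord_Psi_D (c : ℕ) (a : X) : S.tauWord (S.Psi c a) (S.D^[c] a) = a := by
  induction c with
  | zero => rfl
  | succ c ih =>
    rw [Psi_succ, tauWord_cons]
    have h : S.τ (S.D^[c] a) (S.D^[c + 1] a) = S.D^[c] a := by
      have := S.tau_D (S.D^[c] a)
      rwa [show S.D^[c + 1] a = S.D (S.D^[c] a) from Function.iterate_succ_apply' S.D c a]
    rw [h, ih]

lemma tauWord_Psi_eq_iff (c : ℕ) (b u : X) :
    S.tauWord (S.Psi c b) u = b ↔ u = S.D^[c] b := by
  constructor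
  · intro h
    exact S.tauWord_injective _ (h.trans (S.tauWord_Psi_D c b).symm)
  · rintro rfl; exact S.tauWord_Psi_D c b

/-- Concatenation of `Psi c` blocks. -/
def wl (S : NDIS X) (c : ℕ) (as : List X) : List X := (as.map (S.Psi c)).flatten

@[simp] lemma wl_nil (c : ℕ) : S.wl c [] = [] := rfl

@[simp] lemma wl_cons (c : ℕ) (a : X) (as : List X) :
    S.wl c (a :: as) = S.Psi c a ++ S.wl c as := by simp [wl]

lemma wl_append (c : ℕ) (as bs : List X) :
    S.wl c (as ++ bs) = S.wl c as ++ S.wl c bs := by simp [wl]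

lemma Jmap_Psi (c : ℕ) (a : X) : S.Jmap (S.Psi c a) = List.replicate c a := by
  induction c with
  | zero => rfl
  | succ c ih => rw [Psi_succ, Jmap_cons, tauWord_Psi_D, ih, List.replicate_succ]

/-- Block values `A_i = τ_{(blocks after i)}(a_i)`. -/
def Ab (S : NDIS X) (c : ℕ) : List X → List X
  | [] => []
  | a :: as => S.tauWord (S.wl c as) a :: Ab S c as

@[simp] lemma Ab_nil (c : ℕ) : S.Ab c [] = [] := rfl

@[simp] lemma Ab_cons (c : ℕ) (a : X) (as : List X) :
    S.Ab c (a :: as) = S.tauWord (S.wl c as) a :: S.Ab c as := rfl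

@[simp] lemma length_Ab (c : ℕ) (as : List X) : (S.Ab c as).length = as.length := by
  induction as with
  | nil => rfl
  | cons a as ih => simp [ih]

lemma Jmap_wl (c : ℕ) (as : List X) :
    S.Jmap (S.wl c as) = ((S.Ab c as).map (List.replicate c)).flatten := by
  induction as with
  | nil => rfl
  | cons a as ih =>
    rw [wl_cons, Jmap_append, Jmap_Psi, List.map_replicate, ih, Ab_cons, List.map_cons,
      List.flatten_cons]

/-- Reconstruct the family from prescribed block values. -/
noncomputable def famOf (S : NDIS X) (c : ℕ) : List X → List X
  | [] => []
  | b :: bs => (S.tauE (S.wl c (famOf S c bs))).symm b :: famOf S c bs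

lemma Ab_famOf (c : ℕ) (bs : List X) : S.Ab c (S.famOf c bs) = bs := by
  induction bs with
  | nil => rfl
  | cons b bs ih =>
    simp only [famOf, Ab_cons, ih, List.cons.injEq, and_true]
    rw [← tauE_apply, Equiv.apply_symm_apply]

lemma famOf_Ab (c : ℕ) (as : List X) : S.famOf c (S.Ab c as) = as := by
  induction as with
  | nil => rfl
  | cons a as ih =>
    simp only [Ab_cons, famOf, ih, List.cons.injEq, and_true]
    rw [← tauE_apply, Equiv.symm_apply_apply]

lemma Ab_getElem (c : ℕ) (as : List X) (i : ℕ) (hi : i < as.length) :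
    (S.Ab c as)[i]'(by rw [length_Ab]; exact hi) =
      S.tauWord (S.wl c (as.drop (i + 1))) (as[i]'hi) := by
  induction as generalizing i with
  | nil => simp at hi
  | cons a as ih =>
    cases i with
    | zero => rfl
    | succ i =>
      simp only [Ab_cons, List.getElem_cons_succ, List.drop_succ_cons]
      exact ih i (by simpa using hi)

end NDIS

lemma count_flatten_replicate {α : Type*} [DecidableEq α] (c : ℕ) (bs : List α) (z : α) :
    ((bs.map (List.replicate c)).flatten).count z = c * bs.count z := by
  induction bs with
  | nil => simp
  | cons b bs ih =>
    simp only [List.map_cons, List.flatten_cons, List.count_append, ih, List.count_cons,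
      List.count_replicate]
    by_cases h : z = b <;> simp [h, Nat.mul_add] <;> omega

lemma length_flatten_replicate {α : Type*} (c : ℕ) (bs : List α) :
    ((bs.map (List.replicate c)).flatten).length = c * bs.length := by
  induction bs with
  | nil => simp
  | cons b bs ih => simp [ih, Nat.mul_add, Nat.add_comm]

lemma flatten_replicate_inj {α : Type*} {c : ℕ} (hc : 0 < c) : ∀ {bs bs' : List α},
    (bs.map (List.replicate c)).flatten = (bs'.map (List.replicate c)).flatten → bs = bs' := by
  intro bs
  induction bs with
  | nil =>
    intro bs' h
    cases bs' with
    | nil => rfl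
    | cons b bs' =>
      exfalso
      have := congrArg List.length h
      rw [length_flatten_replicate, length_flatten_replicate] at this
      simp at this
      omega
  | cons b bs ih =>
    intro bs' h
    cases bs' with
    | nil =>
      exfalso
      have := congrArg List.length h
      rw [length_flatten_replicate, length_flatten_replicate] at this
      simp at this
      omega
    | cons b' bs' =>
      simp only [List.map_cons, List.flatten_cons] at h
      obtain ⟨h1, h2⟩ := List.append_inj h (by simp)
      have hb : b = b' := by
        cases c with
        | zero => omega
        | succ c =>
          simp only [List.replicate_succ, List.cons.injEq] at h1
          exact h1.1
      rw [hb, ih h2]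

lemma perm_of_flatten_replicate_perm {α : Type*} [DecidableEq α] {c : ℕ} (hc : 0 < c)
    {bs bs' : List α}
    (h : ((bs.map (List.replicate c)).flatten).Perm ((bs'.map (List.replicate c)).flatten)) :
    bs.Perm bs' := by
  rw [List.perm_iff_count] at h ⊢
  intro z
  have := h z
  rw [count_flatten_replicate, count_flatten_replicate] at this
  exact Nat.eq_of_mul_eq_mul_left hc this

namespace NDIS
variable (S : NDIS X)

@[simp] lemma length_famOf (c : ℕ) (bs : List X) : (S.famOf c bs).length = bs.length := by
  induction bs with
  | nil => rfl
  | cons b bs ih => simp [famOf, ih]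

lemma word_eq_wl {k : ℕ} (L : Fin k → ℕ) (c : ℕ) (hcL : ∀ t, L t = c) (b : Fin k → X) :
    S.word L b = S.wl c (List.ofFn b) := by
  rw [word, wl, List.map_ofFn]
  congr 1
  exact congrArg List.ofFn (funext fun t => by rw [hcL t]; rfl)

lemma ab_eq_iff [Nonempty X] {k : ℕ} (L : Fin k → ℕ) (c : ℕ) (hcL : ∀ t, L t = c)
    (a : Fin k → X) (i j : Fin k) (hij : i < j) :
    ((S.Ab c (List.ofFn a))[(i : ℕ)]'(by simpa using i.isLt) =
      (S.Ab c (List.ofFn a))[(j : ℕ)]'(by simpa using j.isLt)) ↔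
    a j = S.Dinv^[L j] (S.tauWord (S.midword L a i j) (a i)) := by
  have hlen : (List.ofFn a).length = k := by simp
  have hi : (i : ℕ) < (List.ofFn a).length := by rw [hlen]; exact i.isLt
  have hj : (j : ℕ) < (List.ofFn a).length := by rw [hlen]; exact j.isLt
  have hgi : (List.ofFn a)[(i : ℕ)] = a i := by simp
  have hgj : (List.ofFn a)[(j : ℕ)] = a j := by simp
  set as := List.ofFn a with has
  set mid := (as.drop ((i : ℕ) + 1)).take ((j : ℕ) - (i : ℕ) - 1) with hmid
  have hdecomp : as.drop ((i : ℕ) + 1) = mid ++ a j :: as.drop ((j : ℕ) + 1) := by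
    rw [hmid]
    conv_lhs => rw [← List.take_append_drop ((j : ℕ) - (i : ℕ) - 1) (as.drop ((i : ℕ) + 1))]
    congr 1
    rw [List.drop_drop]
    have harith : (i : ℕ) + 1 + ((j : ℕ) - (i : ℕ) - 1) = (j : ℕ) := by
      have := hij
      rw [Fin.lt_def] at this
      omega
    rw [harith, List.drop_eq_getElem_cons hj, hgj]
  have hmw : S.midword L a i j = S.wl c mid := by
    rw [midword, hmid, wl]
    have h1 : (List.ofFn fun t => S.Psi (L t) (a t)) = List.map (S.Psi c) as := by
      rw [has, List.map_ofFn]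
      exact congrArg List.ofFn (funext fun t => by rw [hcL t]; rfl)
    rw [h1, ← List.map_drop, ← List.map_take]
  have e1 : (S.Ab c as)[(i : ℕ)]'(by rw [length_Ab]; exact hi) =
      S.tauWord (S.wl c (as.drop ((j : ℕ) + 1)))
        (S.tauWord (S.Psi c (a j)) (S.tauWord (S.wl c mid) (a i))) := by
    rw [S.Ab_getElem c as (i : ℕ) hi, hdecomp, hgi, wl_append, wl_cons, tauWord_append,
      tauWord_append]
  have e2 : (S.Ab c as)[(j : ℕ)]'(by rw [length_Ab]; exact hj) =
      S.tauWord (S.wl c (as.drop ((j : ℕ) + 1))) (a j) := by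
    rw [S.Ab_getElem c as (j : ℕ) hj, hgj]
  rw [e1, e2, hmw, hcL j]
  constructor
  · intro h
    have h2 := S.tauWord_injective _ h
    have h3 := (S.tauWord_Psi_eq_iff c (a j) _).1 h2
    exact (S.D_iterate_eq_iff c (a j) _).1 h3.symm
  · intro h
    have h3 : S.tauWord (S.wl c mid) (a i) = S.D^[c] (a j) :=
      ((S.D_iterate_eq_iff c (a j) _).2 h).symm
    rw [h3, S.tauWord_Psi_D]

lemma isLambdaFamily_iff_nodup [Nonempty X] {k : ℕ} (L : Fin k → ℕ) (c : ℕ)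
    (hcL : ∀ t, L t = c) (a : Fin k → X) :
    S.IsLambdaFamily L a ↔ (S.Ab c (List.ofFn a)).Nodup := by
  rw [List.Nodup, List.pairwise_iff_getElem]
  constructor
  · intro h ni nj hni hnj hlt heq
    have hik : ni < k := by simpa using hni
    have hjk : nj < k := by simpa using hnj
    exact h ⟨ni, hik⟩ ⟨nj, hjk⟩ (Fin.mk_lt_mk.2 hlt)
      ((S.ab_eq_iff L c hcL a ⟨ni, hik⟩ ⟨nj, hjk⟩ (Fin.mk_lt_mk.2 hlt)).1 heq)
  · intro h i j hij heq
    exact h (i : ℕ) (j : ℕ) (by simpa using i.isLt) (by simpa using j.isLt)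
      (Fin.lt_def.1 hij) ((S.ab_eq_iff L c hcL a i j hij).2 heq)

end NDIS

/-- The offset `λ_1 + ⋯ + λ_i` of the `i`-th block (0-based). -/
def blockOffset {k : ℕ} (L : Fin k → ℕ) (i : Fin k) : ℕ :=
  ∑ t ∈ Finset.univ.filter (fun t => t < i), L t

/-- A `(λ_1, …, λ_k)`-shuffle: a permutation strictly increasing on each consecutive block. -/
def IsShuffle {k n : ℕ} (L : Fin k → ℕ) (θ : Equiv.Perm (Fin n)) : Prop :=
  ∀ (i : Fin k) (p q : Fin n), blockOffset L i ≤ (p : ℕ) → p < q →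
    (q : ℕ) < blockOffset L i + L i → θ p < θ q

/-- Let `(X, r)` be a non-degenerate involutive solution with `|X| = m ≥ 2`
and `λ ∈ P(n, m)` with all `k` positive parts equal. If `x` is a `λ`-element, then the
number of `λ`-elements contained in the orbit `O(x)` is exactly `k!`. -/
theorem card_lambda_elements_in_orbit {X : Type*} [Fintype X] [Nonempty X]
    (S : NDIS X) (hm : 2 ≤ Fintype.card X)
    {n k : ℕ} (L : Fin k → ℕ) (hpos : ∀ t, 0 < L t)
    (hconst : ∀ s t : Fin k, L s = L t)
    (hsum : ∑ t, L t = n) (hk : k ≤ Fintype.card X)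
    (x : List X) (hx : S.IsLambdaWord L x) :
    {y | y ∈ S.Orb x ∧ S.IsLambdaWord L y}.ncard = Nat.factorial k := by
  classical
  obtain ⟨c, hc0, hcL⟩ : ∃ c, 0 < c ∧ ∀ t, L t = c := by
    rcases Nat.eq_zero_or_pos k with hk0 | hkpos
    · subst hk0; exact ⟨1, one_pos, fun t => t.elim0⟩
    · exact ⟨L ⟨0, hkpos⟩, hpos _, fun t => hconst t _⟩
  obtain ⟨a, hxw, hfam⟩ := hx
  set As : List X := S.Ab c (List.ofFn a) with hAs
  have hAsnd : As.Nodup := (S.isLambdaFamily_iff_nodup L c hcL a).1 hfam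
  have hAslen : As.length = k := by simp [hAs]
  have hTset : {y | y ∈ S.Orb x ∧ S.IsLambdaWord L y}
      = (fun bs => S.wl c (S.famOf c bs)) '' {bs | bs.Perm As} := by
    ext y
    simp only [Set.mem_setOf_eq, Set.mem_image]
    constructor
    · rintro ⟨hyo, a', rfl, hfam'⟩
      refine ⟨S.Ab c (List.ofFn a'), ?_, ?_⟩
      · have hperm := (S.mem_orb_iff).1 hyo
        rw [hxw, S.word_eq_wl L c hcL a, S.word_eq_wl L c hcL a', S.Jmap_wl, S.Jmap_wl]
          at hperm
        exact (perm_of_flatten_replicate_perm hc0 hperm).symm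
      · rw [S.famOf_Ab]
        exact (S.word_eq_wl L c hcL a').symm
    · rintro ⟨bs, hbs, rfl⟩
      have hlenf : (S.famOf c bs).length = k := by
        rw [S.length_famOf, hbs.length_eq, hAslen]
      set a' : Fin k → X := fun i => (S.famOf c bs)[(i : ℕ)]'(by rw [hlenf]; exact i.isLt)
        with ha'
      have hofn : List.ofFn a' = S.famOf c bs := by
        apply List.ext_getElem (by simp [hlenf])
        intro m h1 h2
        simp [ha']
      constructor
      · rw [S.mem_orb_iff, hxw, S.word_eq_wl L c hcL a, S.Jmap_wl, S.Jmap_wl, S.Ab_famOf]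
        exact ((hbs.symm.map (List.replicate c)).flatten)
      · refine ⟨a', by rw [S.word_eq_wl L c hcL a', hofn], ?_⟩
        refine (S.isLambdaFamily_iff_nodup L c hcL a').2 ?_
        rw [hofn, S.Ab_famOf]
        exact (hbs.nodup_iff).2 hAsnd
  rw [hTset, Set.ncard_image_of_injOn ?_]
  · have hPset : {bs : List X | bs.Perm As} = ↑(As.permutations.toFinset) := by
      ext bs
      simp [List.mem_permutations]
    rw [hPset, Set.ncard_coe_finset,
      List.toFinset_card_of_nodup (List.nodup_permutations _ hAsnd),
      List.length_permutations, hAslen]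
  · intro bs1 _ bs2 _ heq
    have h2 := congrArg S.Jmap heq
    rw [S.Jmap_wl, S.Jmap_wl, S.Ab_famOf, S.Ab_famOf] at h2
    exact flatten_replicate_inj hc0 h2
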